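/- Let k ≥ 2, u ≥ 1 and v ≠ 0 be integers. Then there are infinitely many prime numbers p such that the congruence u·X^k + v ≡ p (mod p²) has an integer solution X. -/
import Mathlib

private lemma binom_sq (a b : ℤ) : ∀ n : ℕ,
    b ^ 2 ∣ (a + b) ^ (n + 1) - (a ^ (n + 1) + (n + 1) * a ^ n * b) := by
  intro n
  induction n with
  | zero => exact ⟨0, by ring⟩
  | succ n ih =>
    obtain ⟨c, hc⟩ := ih
    refine ⟨(a + b) * c + (n + 1) * a ^ n, ?_⟩
    have hc' : (a + b) ^ (n + 1) = a ^ (n + 1) + (n + 1) * a ^ n * b + b ^ 2 * c := by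
      linarith [hc]
    have h2 : (a + b) ^ (n + 2) = (a + b) * (a + b) ^ (n + 1) := by ring
    rw [h2, hc']
    push_cast
    ring

/-- **Lemma 1.** Let `k ≥ 2`, `u ≥ 1` and `v ≠ 0` be integers. Then there are infinitely
many primes `p` such that the congruence `u·X^k + v ≡ p (mod p²)` has an integer
solution `X`. -/
theorem lemma1 (k : ℕ) (u v : ℤ) (hk : 2 ≤ k) (hu : 1 ≤ u) (hv : v ≠ 0) :
    {p : ℕ | p.Prime ∧ ∃ X : ℤ, ((p : ℤ) ^ 2) ∣ (u * X ^ k + v - p)}.Infinite := by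
  obtain ⟨j, rfl⟩ : ∃ j, k = j + 1 := ⟨k - 1, by omega⟩
  apply Set.infinite_of_not_bddAbove
  rintro ⟨n, hn⟩
  -- choose a large bound N
  set N : ℕ := max (n + 1) (max u.natAbs (max v.natAbs (max (j + 1) 3))) with hN
  set P : ℤ := (N.factorial : ℤ) with hPdef
  set M : ℤ := u * v ^ j * P ^ (j + 1) + 1 with hMdef
  have h3N : 3 ≤ N := by omega
  have hP6 : (6 : ℤ) ≤ P := by
    have : Nat.factorial 3 ≤ Nat.factorial N := Nat.factorial_le h3N
    rw [hPdef]; exact_mod_cast this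
  have hv1 : (1 : ℤ) ≤ |v| := Int.one_le_abs hv
  have hterm : (6 : ℤ) ≤ |u * v ^ j * P ^ (j + 1)| := by
    have hPpos : (0 : ℤ) < P := by linarith
    rw [abs_mul, abs_mul, abs_pow, abs_pow, abs_of_pos hPpos, abs_of_pos (by linarith : (0:ℤ) < u)]
    have h1 : (1 : ℤ) ≤ |v| ^ j := one_le_pow₀ hv1
    have h2 : (6 : ℤ) ≤ P ^ (j + 1) := by
      calc (6 : ℤ) ≤ P := hP6
      _ ≤ P ^ (j + 1) := le_self_pow₀ (by linarith) (by omega)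
    have h4 : (1 : ℤ) ≤ u * |v| ^ j := by nlinarith
    have h5 := mul_le_mul h4 h2 (by linarith : (0:ℤ) ≤ 6) (by linarith : (0:ℤ) ≤ u * |v| ^ j)
    linarith
  have hMabs : (5 : ℤ) ≤ |M| := by
    have habs := abs_add_le M (-1)
    have h' : |u * v ^ j * P ^ (j + 1)| = |M + (-1)| := by rw [hMdef]; ring_nf
    rw [← h'] at habs
    have : |u * v ^ j * P ^ (j + 1)| ≤ |M| + 1 := by simpa using habs
    linarith
  have hMnat : M.natAbs ≠ 1 := by
    have : (5 : ℤ) ≤ (M.natAbs : ℤ) := by rwa [Int.abs_eq_natAbs] at hMabs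
    omega
  obtain ⟨q, hq, hqM⟩ := Int.exists_prime_and_dvd hMnat
  set p : ℕ := q.natAbs with hpdef
  have hp : p.Prime := Int.prime_iff_natAbs_prime.mp hq
  have hpZ : Prime (p : ℤ) := Nat.prime_iff_prime_int.mp hp
  have hpM : (p : ℤ) ∣ M := (Int.natAbs_dvd).mpr hqM
  -- p > N
  have hpN : N < p := by
    by_contra h
    push_neg at h
    have hdvdP : (p : ℤ) ∣ P := by
      rw [hPdef]; exact_mod_cast Nat.dvd_factorial hp.pos h
    have h1 : (p : ℤ) ∣ M - 1 := by
      rw [hMdef]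
      simpa using Dvd.dvd.mul_left (dvd_pow hdvdP (by omega)) (u * v ^ j)
    have hone : (p : ℤ) ∣ 1 := by
      have := dvd_sub hpM h1
      simpa using this
    have := Int.eq_one_of_dvd_one (by positivity) hone
    have : p = 1 := by exact_mod_cast this
    exact hp.one_lt.ne' this
  -- p does not divide u, v, j+1, P
  have hple : ∀ w : ℤ, w ≠ 0 → (p : ℤ) ∣ w → w.natAbs ≤ N → False := by
    intro w hw hdvd hle
    have hd2 : p ∣ w.natAbs := by
      have := Int.natAbs_dvd_natAbs.mpr hdvd
      simpa using this
    have : p ≤ w.natAbs := Nat.le_of_dvd (Int.natAbs_pos.mpr hw) hd2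
    omega
  have hpu : ¬ (p : ℤ) ∣ u := fun h => hple u (by linarith) h (by omega)
  have hpv : ¬ (p : ℤ) ∣ v := fun h => hple v hv h (by omega)
  have hpj : ¬ (p : ℤ) ∣ ((j : ℤ) + 1) := fun h => hple ((j : ℤ) + 1) (by positivity) h (by
    have hj : ((j : ℤ) + 1).natAbs = j + 1 := by omega
    omega)
  have hpP : ¬ (p : ℤ) ∣ P := by
    intro h
    rw [hPdef] at h
    have h' : p ∣ N.factorial := by exact_mod_cast h
    have := (Nat.Prime.dvd_factorial hp).mp h'
    omega
  set a : ℤ := v * P with hadef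
  have hpa : ¬ (p : ℤ) ∣ a := by
    intro h
    rcases hpZ.dvd_mul.mp h with h' | h'
    · exact hpv h'
    · exact hpP h'
  -- p divides u * a^(j+1) + v
  have hdvd : (p : ℤ) ∣ u * a ^ (j + 1) + v := by
    have : u * a ^ (j + 1) + v = v * M := by rw [hadef, hMdef]; ring
    rw [this]
    exact Dvd.dvd.mul_left hpM v
  obtain ⟨c, hc⟩ := hdvd
  -- m := u * (j+1) * a^j is coprime to p
  set m : ℤ := u * ((j : ℤ) + 1) * a ^ j with hmdef
  have hpm : ¬ (p : ℤ) ∣ m := by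
    intro h
    rcases hpZ.dvd_mul.mp h with h' | h'
    · rcases hpZ.dvd_mul.mp h' with h'' | h''
      · exact hpu h''
      · exact hpj h''
    · exact hpa (hpZ.dvd_of_dvd_pow h')
  have hcop : IsCoprime ((p : ℤ)) m := (hpZ.coprime_iff_not_dvd).mpr hpm
  obtain ⟨x, y, hxy⟩ := hcop
  set t : ℤ := y * (1 - c) with htdef
  have he : m * t + c - 1 = (p : ℤ) * (-(x * (1 - c))) := by
    have hym : y * m = 1 - x * (p : ℤ) := by linarith [hxy]
    calc m * t + c - 1 = (y * m) * (1 - c) + c - 1 := by rw [htdef]; ring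
    _ = (1 - x * (p : ℤ)) * (1 - c) + c - 1 := by rw [hym]
    _ = (p : ℤ) * (-(x * (1 - c))) := by ring
  -- binomial expansion
  obtain ⟨e, he2⟩ := binom_sq a (t * (p : ℤ)) j
  have hd : (a + t * (p : ℤ)) ^ (j + 1) - (a ^ (j + 1) + ((j : ℤ) + 1) * a ^ j * (t * (p : ℤ)))
      = (p : ℤ) ^ 2 * (t ^ 2 * e) := by
    linear_combination he2
  have hm' : m = u * ((j : ℤ) + 1) * a ^ j := hmdef
  -- conclude: p is in the set, contradicting the bound
  have hmem : p ∈ {p : ℕ | p.Prime ∧ ∃ X : ℤ, ((p : ℤ) ^ 2) ∣ (u * X ^ (j + 1) + v - p)} := by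
    refine ⟨hp, a + t * p, ⟨u * (t ^ 2 * e) + (-(x * (1 - c))), ?_⟩⟩
    linear_combination u * hd + hc + (p : ℤ) * he - t * (p : ℤ) * hm'
  have := hn hmem
  omega
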